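/- Let R be a Noetherian ring, a ⊆ R an ideal, and X an a-torsion R-module. If the submodule (0 :_X a) = {x ∈ X : a x = 0} is Artinian, then X is Artinian (Melkersson's Lemma, as used in the paper). -/

import Mathlib

open CategoryTheory CategoryTheory.Limits Opposite

/-- `ℕ` acts on `ℤ`-degrees by addition (used to grade modules over `ℕ`-graded rings). -/
instance : VAdd ℕ ℤ := ⟨fun n z => (n : ℤ) + z⟩

noncomputable section

/-- The directed system `M ⧸ a^t • M`, `t : ℕ`. -/
def genLCModDiagram {R : Type} [CommRing R] (a : Ideal R) (M : Type) [AddCommGroup M]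
    [Module R M] : ℕᵒᵖ ⥤ ModuleCat R where
  obj t := ModuleCat.of R (M ⧸ (a ^ (unop t) • ⊤ : Submodule R M))
  map {t t'} w := ModuleCat.ofHom (Submodule.mapQ (a ^ (unop t) • ⊤) (a ^ (unop t') • ⊤) LinearMap.id
    (Submodule.smul_mono (Ideal.pow_le_pow_right w.unop.down.down) le_rfl))
  map_id t := by
    apply ModuleCat.hom_ext
    apply Submodule.linearMap_qext
    rfl
  map_comp {t t' t''} f g := by
    apply ModuleCat.hom_ext
    apply Submodule.linearMap_qext
    ext x
    simp

/-- Generalized local cohomology `H^i_a(M, -)`, the direct limit of `Ext^i(M/a^t M, -)`. -/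
def genLocalCohomology {R : Type} [CommRing R] (a : Ideal R) (M : Type) [AddCommGroup M]
    [Module R M] (i : ℕ) : ModuleCat R ⥤ ModuleCat R :=
  colimit ((genLCModDiagram a M).op ⋙ Ext R (ModuleCat R) i)

/-- `H^i_a(M,N)` as an object of `ModuleCat R`. -/
abbrev GLC {R : Type} [CommRing R] (a : Ideal R) (M : Type) [AddCommGroup M] [Module R M]
    (i : ℕ) (N : Type) [AddCommGroup N] [Module R N] : ModuleCat R :=
  (genLocalCohomology a M i).obj (ModuleCat.of R N)

/-- The `a`-torsion functor `Γ_a` : the submodule of elements killed by some power of `a`. -/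
def torsionGamma {R : Type} [CommRing R] (a : Ideal R) (X : Type) [AddCommGroup X]
    [Module R X] : Submodule R X :=
  ⨆ n : ℕ, Submodule.torsionBySet R X ((a ^ n : Ideal R) : Set R)

/-- `M` has projective dimension at most `n`: all `Ext^i(M, -)` for `i > n` vanish. -/
def HasProjDimLE {R : Type} [CommRing R] (M : Type) [AddCommGroup M] [Module R M]
    (n : ℕ) : Prop :=
  ∀ i : ℕ, n < i → ∀ N : ModuleCat R,
    Subsingleton (((Ext R (ModuleCat R) i).obj (op (ModuleCat.of R M))).obj N)

/-- The irrelevant ideal `R_+` of an `ℕ`-graded ring. -/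
def irrIdeal {R : Type} [CommRing R] (𝒜 : ℕ → AddSubgroup R) [GradedRing 𝒜] : Ideal R :=
  (HomogeneousIdeal.irrelevant 𝒜).toIdeal

/-- The ideal `m₀R` of `R` generated by the maximal ideal of the base ring `R₀ = 𝒜 0`. -/
def mzR {R : Type} [CommRing R] (𝒜 : ℕ → AddSubgroup R) [GradedRing 𝒜]
    [IsLocalRing (𝒜 0)] : Ideal R :=
  Ideal.span (Subtype.val '' ((IsLocalRing.maximalIdeal (𝒜 0) : Ideal (𝒜 0)) : Set (𝒜 0)))

open Submodule in
/-- Principal case of Melkersson's lemma. -/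
lemma melkersson_principal {R : Type} [CommRing R] (x : R) (X : Type) [AddCommGroup X]
    [Module R X] (htor : ∀ m : X, ∃ k : ℕ, x ^ k • m = 0)
    (hart : IsArtinian R (Submodule.torsionBy R X x)) : IsArtinian R X := by
  set S := Submodule.torsionBy R X x with hSdef
  -- stabilization of antitone chains of submodules of `S`
  have stab : ∀ g : ℕ → Submodule R S, (∀ {n m : ℕ}, n ≤ m → g m ≤ g n) →
      ∃ k, ∀ n, k ≤ n → g n = g k := by
    intro g hg
    obtain ⟨k, hk⟩ := IsArtinian.monotone_stabilizes (R := R) (M := S)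
      ⟨fun n => OrderDual.toDual (g n), fun n m h => hg h⟩
    exact ⟨k, fun n hn => (hk n hn).symm⟩
  apply monotone_stabilizes_iff_artinian.mp
  intro f
  set B : ℕ → Submodule R X := fun n => OrderDual.ofDual (f n) with hBdef
  have hB : ∀ {n m : ℕ}, n ≤ m → B m ≤ B n := fun h => f.monotone h
  -- multiplication by `x ^ j`
  set μ : ℕ → (X →ₗ[R] X) := fun j => x ^ j • LinearMap.id with hμdef
  have hμ : ∀ j (b : X), μ j b = x ^ j • b := by intro j b; simp [hμdef]
  set F : ℕ → ℕ → Submodule R S :=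
    fun n j => Submodule.comap S.subtype (Submodule.map (μ j) (B n)) with hFdef
  have hFn : ∀ j ⦃n m : ℕ⦄, n ≤ m → F m j ≤ F n j := fun j n m h =>
    Submodule.comap_mono (Submodule.map_mono (hB h))
  have hFj : ∀ n ⦃j j' : ℕ⦄, j ≤ j' → F n j' ≤ F n j := by
    intro n
    apply antitone_nat_of_succ_le
    intro j
    apply Submodule.comap_mono
    rintro y ⟨b, hb, rfl⟩
    refine ⟨x • b, Submodule.smul_mem _ _ hb, ?_⟩
    simp only [hμ]
    rw [smul_smul, ← pow_succ]
  -- diagonal chain stabilizes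
  obtain ⟨c, hc⟩ := stab (fun n => F n n) (fun {n m} h => le_trans (hFn m h) (hFj n h))
  have hdiag : ∀ {n j : ℕ}, c ≤ n → c ≤ j → F n j = F c c := by
    intro n j hn hj
    refine le_antisymm (le_trans (hFn j hn) (hFj c hj)) ?_
    calc F c c = F (max n j) (max n j) := (hc _ (le_trans hn (le_max_left _ _))).symm
      _ ≤ F n j := le_trans (hFn _ (le_max_left _ _)) (hFj n (le_max_right _ _))
  -- uniform stabilization for finitely many rows
  have hfin : ∀ t : ℕ, ∃ p, c ≤ p ∧ ∀ j < t, ∀ n, p ≤ n → F n j = F p j := by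
    intro t
    induction t with
    | zero => exact ⟨c, le_rfl, fun j hj => absurd hj (Nat.not_lt_zero j)⟩
    | succ t ih =>
      obtain ⟨p, hpc, hp⟩ := ih
      obtain ⟨q, hq⟩ := stab (fun n => F n t) (fun {n m} h => hFn t h)
      refine ⟨max p q, le_trans hpc (le_max_left _ _), ?_⟩
      intro j hj n hn
      rcases Nat.lt_succ_iff_lt_or_eq.mp hj with hj' | rfl
      · rw [hp j hj' n (le_trans (le_max_left _ _) hn),
          hp j hj' (max p q) (le_max_left _ _)]
      · rw [hq n (le_trans (le_max_right _ _) hn), hq (max p q) (le_max_right _ _)]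
  obtain ⟨p, hpc, hp⟩ := hfin c
  have hFstab : ∀ j n, p ≤ n → F n j = F p j := by
    intro j n hn
    rcases lt_or_ge j c with hj | hj
    · exact hp j hj n hn
    · rw [hdiag (le_trans hpc hn) hj]; exact (hdiag hpc hj).symm
  -- main induction
  have key : ∀ n, p ≤ n → ∀ j : ℕ, B p ⊓ LinearMap.ker (μ j) ≤ B n := by
    intro n hn j
    induction j with
    | zero =>
      rintro b ⟨-, hb2⟩
      have hb2' : x ^ 0 • b = 0 := hb2
      rw [pow_zero, one_smul] at hb2'
      rw [hb2']; exact zero_mem _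
    | succ j ih =>
      rintro b ⟨hbp, hbk⟩
      have hbk' : x ^ (j + 1) • b = 0 := hbk
      have hxbS : x ^ j • b ∈ S := by
        rw [hSdef, Submodule.mem_torsionBy_iff, smul_smul, ← pow_succ']
        exact hbk'
      have h1 : (⟨x ^ j • b, hxbS⟩ : S) ∈ F p j := by
        rw [hFdef]
        exact Submodule.mem_comap.mpr ⟨b, hbp, (hμ j b)⟩
      rw [← hFstab j n hn] at h1
      obtain ⟨b', hb', hb'eq⟩ := Submodule.mem_comap.mp h1
      rw [hμ] at hb'eq
      have hsub : b - b' ∈ B p ⊓ LinearMap.ker (μ j) := by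
        refine Submodule.mem_inf.mpr ⟨Submodule.sub_mem _ hbp (hB hn hb'), ?_⟩
        rw [LinearMap.mem_ker, hμ, smul_sub, hb'eq]
        simp
      have : b - b' ∈ B n := ih hsub
      have := Submodule.add_mem _ this hb'
      rwa [sub_add_cancel] at this
  refine ⟨p, fun n hn => ?_⟩
  have : B p = B n := by
    refine le_antisymm (fun b hb => ?_) (hB hn)
    obtain ⟨k, hk⟩ := htor b
    refine key n hn k (Submodule.mem_inf.mpr ⟨hb, ?_⟩)
    rw [LinearMap.mem_ker, hμ]; exact hk
  exact congrArg OrderDual.toDual this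

open Submodule in
lemma melkersson_list {R : Type} [CommRing R] (l : List R) :
    ∀ (X : Type) [AddCommGroup X] [Module R X],
    (∀ m : X, ∃ k : ℕ, ∀ r ∈ (Ideal.span {y | y ∈ l}) ^ k, r • m = 0) →
    IsArtinian R (Submodule.torsionBySet R X ({y | y ∈ l} : Set R)) →
    IsArtinian R X := by
  induction l with
  | nil =>
    intro X _ _ htor hart
    have htop : Submodule.torsionBySet R X ({y | y ∈ ([] : List R)} : Set R) = ⊤ := by
      rw [eq_top_iff]
      intro m _
      rw [Submodule.mem_torsionBySet_iff]
      rintro ⟨a, ha⟩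
      simp only [Set.mem_setOf_eq, List.not_mem_nil] at ha
    rw [htop] at hart
    exact isArtinian_of_linearEquiv (Submodule.topEquiv (R := R) (M := X))
  | cons x l ih =>
    intro X _ _ htor hart
    set Y := Submodule.torsionBy R X x with hYdef
    have hsub : ({y | y ∈ l} : Set R) ⊆ {y | y ∈ x :: l} := fun y hy =>
      List.mem_cons_of_mem x hy
    have hpow : ∀ (I J : Ideal R), I ≤ J → ∀ k, I ^ k ≤ J ^ k := by
      intro I J hIJ k
      induction k with
      | zero => simp
      | succ k ihk => rw [pow_succ, pow_succ]; exact Ideal.mul_mono ihk hIJ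
    -- torsion hypothesis for Y
    have hYtor : ∀ m : Y, ∃ k : ℕ, ∀ r ∈ (Ideal.span {y | y ∈ l}) ^ k, r • m = 0 := by
      intro m
      obtain ⟨k, hk⟩ := htor (m : X)
      refine ⟨k, fun r hr => ?_⟩
      have hr' : r ∈ (Ideal.span {y | y ∈ x :: l}) ^ k :=
        hpow _ _ (Ideal.span_mono hsub) k hr
      exact Subtype.ext (by simpa using hk r hr')
    -- the annihilator of span l in Y is Artinian
    have hYart : IsArtinian R (Submodule.torsionBySet R (↥Y) ({y | y ∈ l} : Set R)) := by
      have hmem : ∀ m : Submodule.torsionBySet R (↥Y) ({y | y ∈ l} : Set R),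
          ((m : Y) : X) ∈ Submodule.torsionBySet R X ({y | y ∈ x :: l} : Set R) := by
        intro m
        rw [Submodule.mem_torsionBySet_iff]
        rintro ⟨a, ha⟩
        rcases List.mem_cons.mp ha with rfl | ha'
        · exact (Submodule.mem_torsionBy_iff _ _).mp (m : Y).2
        · have := (Submodule.mem_torsionBySet_iff _ _).mp m.2 ⟨a, ha'⟩
          simpa using congrArg (Subtype.val : Y → X) this
      let g : Submodule.torsionBySet R (↥Y) ({y | y ∈ l} : Set R) →ₗ[R]
          Submodule.torsionBySet R X ({y | y ∈ x :: l} : Set R) :=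
        LinearMap.codRestrict _ (Y.subtype.comp (Submodule.subtype _)) hmem
      have hginj : Function.Injective g := by
        intro m m' h
        apply Subtype.ext
        apply Subtype.ext
        show Subtype.val (g m) = Subtype.val (g m')
        exact congrArg _ h
      exact isArtinian_of_injective g hginj
    have hYisArt : IsArtinian R (↥Y) := ih (↥Y) hYtor hYart
    -- X is x-torsion
    have hxtor : ∀ m : X, ∃ k : ℕ, x ^ k • m = 0 := by
      intro m
      obtain ⟨k, hk⟩ := htor m
      refine ⟨k, hk _ (Ideal.pow_mem_pow (Ideal.subset_span ?_) k)⟩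
      exact List.mem_cons_self
    exact melkersson_principal x X hxtor hYisArt


/-- Melkersson's Lemma: if `X` is `a`-torsion and `(0 :_X a)` is Artinian, then `X` is
Artinian. -/
theorem stmt16 {R : Type} [CommRing R] [IsNoetherianRing R] (a : Ideal R)
    (X : Type) [AddCommGroup X] [Module R X]
    (htor : ∀ x : X, ∃ k : ℕ, ∀ r ∈ a ^ k, r • x = 0)
    (hart : IsArtinian R (Submodule.torsionBySet R X ((a : Ideal R) : Set R))) :
    IsArtinian R X := by
  obtain ⟨s, hs⟩ := IsNoetherian.noetherian a
  have hset : ({y | y ∈ s.toList} : Set R) = (↑s : Set R) := by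
    ext y; simp [Finset.mem_toList]
  have hs' : Ideal.span ((↑s : Set R)) = a := hs
  apply melkersson_list s.toList X
  · intro m
    obtain ⟨k, hk⟩ := htor m
    refine ⟨k, ?_⟩
    rw [hset, hs']
    exact hk
  · rw [hset, Submodule.torsionBySet_eq_torsionBySet_span, hs']
    exact hart
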